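/- Let y ∈ Sp_𝒞(G), i.e., y lies in the convex hull of characteristic vectors of Gao-trees for the chain V_0 ⊊ V_1 ⊊ … ⊊ V_k. Then for every i = 1,…,k: y(δ(L_i)) = 2, y(E(L_i)) = |L_i| − 1, and Σ_{v∈L_i} y(δ(v)) = 2|L_i|. -/

import Mathlib

open Finset
open scoped Classical

variable {V : Type*} [Fintype V]

/-- The set of edges of `G` with one endpoint in `S₁` and the other in `S₂`. -/
noncomputable def cutBetween (G : SimpleGraph V) (S₁ S₂ : Finset V) : Finset (Sym2 V) :=
  G.edgeFinset.filter (fun e => ∃ u v, e = s(u, v) ∧ u ∈ S₁ ∧ v ∈ S₂)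

/-- The cut `δ(S)`: edges of `G` with exactly one endpoint in `S`. -/
noncomputable def cut (G : SimpleGraph V) (S : Finset V) : Finset (Sym2 V) :=
  cutBetween G S Sᶜ

/-- `E(S)`: edges of `G` with both endpoints in `S`. -/
noncomputable def inducedEdges (G : SimpleGraph V) (S : Finset V) : Finset (Sym2 V) :=
  G.edgeFinset.filter (fun e => ∀ v ∈ e, v ∈ S)

/-- `T` is the edge set of a spanning tree of `G`. -/
def IsSpanningTree (G : SimpleGraph V) (T : Finset (Sym2 V)) : Prop :=
  (T : Set (Sym2 V)) ⊆ G.edgeSet ∧ (SimpleGraph.fromEdgeSet (T : Set (Sym2 V))).IsTree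

/-- Characteristic vector of a set of edges. -/
noncomputable def chi (T : Finset (Sym2 V)) : Sym2 V → ℝ :=
  fun e => if e ∈ T then 1 else 0

/-- The spanning tree polytope `Sp(G)`. -/
noncomputable def spanningTreePolytope (G : SimpleGraph V) : Set (Sym2 V → ℝ) :=
  convexHull ℝ {x | ∃ T : Finset (Sym2 V), IsSpanningTree G T ∧ x = chi T}

/-- The level sets `L_i = V_i \ V_{i-1}` of a chain `V_0 ⊊ … ⊊ V_k` (with `V_{-1} = ∅`,
`V_{k+1} = V`). -/
noncomputable def level (Vc : ℕ → Finset V) (k : ℕ) : ℕ → Finset V :=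
  fun i => if i = 0 then Vc 0 else if i ≤ k then Vc i \ Vc (i - 1) else Finset.univ \ Vc k

/-- `x` is a chain-point for the chain `V_0 ⊊ … ⊊ V_k`. -/
def IsChainPoint (G : SimpleGraph V) (Vc : ℕ → Finset V) (k : ℕ) (x : Sym2 V → ℝ) : Prop :=
  x ∈ spanningTreePolytope G ∧
  (∑ e ∈ cut G (Vc 0), x e) = 1 ∧
  (∑ e ∈ cut G (Vc k), x e) = 1 ∧
  (∀ i, 1 ≤ i → i ≤ k - 1 → (∑ e ∈ cut G (Vc i), x e) < 2) ∧
  (∀ i, 1 ≤ i → i ≤ k →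
    (∑ v ∈ level Vc k i, ∑ e ∈ cut G {v}, x e) = 2 * ((level Vc k i).card : ℝ))

/-- A Gao-tree for the chain `V_0 ⊊ … ⊊ V_k`: a spanning tree meeting each cut `δ(V_i)`
in exactly one edge. -/
def IsGaoTree (G : SimpleGraph V) (Vc : ℕ → Finset V) (k : ℕ) (T : Finset (Sym2 V)) : Prop :=
  IsSpanningTree G T ∧ ∀ i ≤ k, (T ∩ cut G (Vc i)).card = 1

/-- A Gao-tree for the subchain of `V_0 ⊊ … ⊊ V_k` given by the index set `I`. -/
def IsGaoTreeOn (G : SimpleGraph V) (Vc : ℕ → Finset V) (I : Finset ℕ)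
    (T : Finset (Sym2 V)) : Prop :=
  IsSpanningTree G T ∧ ∀ i ∈ I, (T ∩ cut G (Vc i)).card = 1

/-- `Sp_𝒞(G)`: the convex hull of characteristic vectors of Gao-trees. -/
noncomputable def gaoPolytope (G : SimpleGraph V) (Vc : ℕ → Finset V) (k : ℕ) :
    Set (Sym2 V → ℝ) :=
  convexHull ℝ {x | ∃ T : Finset (Sym2 V), IsGaoTree G Vc k T ∧ x = chi T}

/-- `F` is the edge set of a spanning tree of the induced subgraph `G(U)`. -/
def IsSpanningTreeOfInduced (G : SimpleGraph V) (U : Finset V) (F : Finset (Sym2 V)) : Prop :=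
  (F : Set (Sym2 V)) ⊆ G.edgeSet ∧ (∀ e ∈ F, ∀ v ∈ e, v ∈ U) ∧
  F.card = U.card - 1 ∧
  ∀ u ∈ U, ∀ v ∈ U, (SimpleGraph.fromEdgeSet (F : Set (Sym2 V))).Reachable u v

/-- The rank of `X` in the cycle matroid of `G`. -/
noncomputable def cycleRank (G : SimpleGraph V) (X : Finset (Sym2 V)) : ℕ :=
  (G.edgeFinset.powerset.filter (fun T => IsSpanningTree G T)).sup (fun T => (T ∩ X).card)

/-- The rank of `X` in the matroid whose bases are the Gao-trees. -/
noncomputable def gaoRank (G : SimpleGraph V) (Vc : ℕ → Finset V) (k : ℕ)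
    (X : Finset (Sym2 V)) : ℕ :=
  (G.edgeFinset.powerset.filter (fun T => IsGaoTree G Vc k T)).sup (fun T => (T ∩ X).card)

/-- `x` is a solution of the `s`–`t` path TSP subtour elimination LP. -/
def IsSubtourLPSolution (G : SimpleGraph V) (s t : V) (x : Sym2 V → ℝ) : Prop :=
  x ∈ spanningTreePolytope G ∧
  (∀ v, v ≠ s → v ≠ t → (∑ e ∈ cut G {v}, x e) = 2) ∧
  (∑ e ∈ cut G {s}, x e) = 1 ∧ (∑ e ∈ cut G {t}, x e) = 1

/-- Rank function of a matroid on a finite ground set, as a function on finsets. -/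
noncomputable def mrank {E : Type*} [Fintype E] (M : Matroid E) (X : Finset E) : ℕ :=
  (X.powerset.filter (fun I : Finset E => M.Indep (I : Set E))).sup Finset.card

/-- Convex hull of characteristic vectors of independent sets of a matroid. -/
noncomputable def indepPolytope {E : Type*} [Fintype E] (M : Matroid E) : Set (E → ℝ) :=
  convexHull ℝ {x | ∃ I : Finset E, M.Indep (I : Set E) ∧
    x = fun e => if e ∈ I then (1 : ℝ) else 0}
section AuxStmt17
open SimpleGraph

lemma aux_mem_cut_pair {G : SimpleGraph V} {a b : V} (hab : G.Adj a b) (S : Finset V) :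
    s(a,b) ∈ cut G S ↔ ((a ∈ S ∧ b ∉ S) ∨ (b ∈ S ∧ a ∉ S)) := by
  constructor
  · intro h
    rw [cut, cutBetween, Finset.mem_filter] at h
    obtain ⟨-, u, w, he, hu, hw⟩ := h
    rw [Finset.mem_compl] at hw
    rw [Sym2.eq_iff] at he
    rcases he with ⟨rfl, rfl⟩ | ⟨rfl, rfl⟩
    · exact Or.inl ⟨hu, hw⟩
    · exact Or.inr ⟨hu, hw⟩
  · rintro (⟨h1, h2⟩ | ⟨h1, h2⟩) <;> rw [cut, cutBetween, Finset.mem_filter]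
    · exact ⟨mem_edgeFinset.2 ((G.mem_edgeSet).2 hab), a, b, rfl, h1, Finset.mem_compl.2 h2⟩
    · exact ⟨mem_edgeFinset.2 ((G.mem_edgeSet).2 hab), b, a, Sym2.eq_swap.symm, h1, Finset.mem_compl.2 h2⟩

lemma aux_mem_ind_pair {G : SimpleGraph V} {a b : V} (hab : G.Adj a b) (S : Finset V) :
    s(a,b) ∈ inducedEdges G S ↔ (a ∈ S ∧ b ∈ S) := by
  rw [inducedEdges, Finset.mem_filter]
  constructor
  · rintro ⟨-, h⟩
    exact ⟨h a (by simp), h b (by simp)⟩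
  · rintro ⟨ha, hb⟩
    refine ⟨mem_edgeFinset.2 ((G.mem_edgeSet).2 hab), ?_⟩
    intro v hv
    rcases Sym2.mem_iff.1 hv with rfl | rfl
    exacts [ha, hb]

lemma aux_sum_chi (T A : Finset (Sym2 V)) : (∑ e ∈ A, chi T e) = ((T ∩ A).card : ℝ) := by
  unfold chi
  rw [Finset.sum_boole, Finset.filter_mem_eq_inter, Finset.inter_comm]

lemma aux_handshake (G : SimpleGraph V) (L : Finset V) (x : Sym2 V → ℝ) :
    (∑ v ∈ L, ∑ e ∈ cut G {v}, x e)
      = 2 * (∑ e ∈ inducedEdges G L, x e) + (∑ e ∈ cut G L, x e) := by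
  have key : ∀ (A : Finset (Sym2 V)), A ⊆ G.edgeFinset →
      (∑ e ∈ A, x e) = ∑ e ∈ G.edgeFinset, if e ∈ A then x e else 0 := by
    intro A hA
    rw [Finset.sum_ite_mem, Finset.inter_eq_right.2 hA]
  have hcutsub : ∀ S : Finset V, cut G S ⊆ G.edgeFinset := fun S => Finset.filter_subset _ _
  have hindsub : inducedEdges G L ⊆ G.edgeFinset := Finset.filter_subset _ _
  calc ∑ v ∈ L, ∑ e ∈ cut G {v}, x e
      = ∑ v ∈ L, ∑ e ∈ G.edgeFinset, if e ∈ cut G {v} then x e else 0 :=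
        Finset.sum_congr rfl fun v _ => key _ (hcutsub _)
    _ = ∑ e ∈ G.edgeFinset, ∑ v ∈ L, if e ∈ cut G {v} then x e else 0 := Finset.sum_comm
    _ = ∑ e ∈ G.edgeFinset, (2 * (if e ∈ inducedEdges G L then x e else 0)
          + (if e ∈ cut G L then x e else 0)) := by
        refine Finset.sum_congr rfl ?_
        intro e he
        induction e using Sym2.ind with
        | _ a b =>
          have hadj : G.Adj a b := (G.mem_edgeSet).1 (mem_edgeFinset.1 he)
          have hne : a ≠ b := hadj.ne
          have h1 : ∀ v : V, (s(a,b) ∈ cut G {v}) ↔ (v = a ∨ v = b) := by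
            intro v
            rw [aux_mem_cut_pair hadj]
            simp only [Finset.mem_singleton]
            constructor
            · rintro (⟨rfl, -⟩ | ⟨rfl, -⟩)
              exacts [Or.inl rfl, Or.inr rfl]
            · rintro (rfl | rfl)
              · exact Or.inl ⟨rfl, fun h => hne h.symm⟩
              · exact Or.inr ⟨rfl, fun h => hne h⟩
          have hsum : (∑ v ∈ L, if s(a,b) ∈ cut G {v} then x s(a,b) else 0)
              = (if a ∈ L then x s(a,b) else 0) + (if b ∈ L then x s(a,b) else 0) := by
            have h2 : ∀ v ∈ L, (if s(a,b) ∈ cut G {v} then x s(a,b) else 0)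
                = (if v = a then x s(a,b) else 0) + (if v = b then x s(a,b) else 0) := by
              intro v _
              simp only [h1 v]
              rcases eq_or_ne v a with rfl | hva <;> rcases eq_or_ne v b with rfl | hvb <;>
                simp_all
            rw [Finset.sum_congr rfl h2, Finset.sum_add_distrib,
              Finset.sum_ite_eq' L a, Finset.sum_ite_eq' L b]
          rw [hsum]
          simp only [aux_mem_ind_pair hadj, aux_mem_cut_pair hadj]
          by_cases ha : a ∈ L <;> by_cases hb : b ∈ L <;> simp [ha, hb] <;> ring
    _ = 2 * (∑ e ∈ inducedEdges G L, x e) + (∑ e ∈ cut G L, x e) := by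
        rw [Finset.sum_add_distrib, ← Finset.mul_sum, ← key _ hindsub, ← key _ (hcutsub _)]

lemma aux_walk_cross {H : SimpleGraph V} (S : V → Prop) :
    ∀ {u v : V} (p : H.Walk u v), S u → ¬ S v →
      ∃ a b, H.Adj a b ∧ S a ∧ ¬ S b ∧ s(a,b) ∈ p.edges := by
  intro u v p
  induction p with
  | nil => intro hu hv; exact absurd hu hv
  | @cons u m v h q ih =>
    intro hu hv
    by_cases hm : S m
    · obtain ⟨a, b, h1, h2, h3, h4⟩ := ih hm hv
      exact ⟨a, b, h1, h2, h3, by rw [Walk.edges_cons]; exact List.mem_cons_of_mem _ h4⟩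
    · exact ⟨u, m, h, hu, hm, by rw [Walk.edges_cons]; exact List.mem_cons_self⟩

lemma aux_trail_stays {H : SimpleGraph V} (S : V → Prop) (e0 : Sym2 V)
    (huniq : ∀ a b, H.Adj a b → S a → ¬ S b → s(a,b) = e0) :
    ∀ {u v : V} (p : H.Walk u v), p.IsTrail → S u → S v → ∀ w ∈ p.support, S w := by
  intro u v p
  induction p with
  | nil =>
    intro _ hu _ w hw
    rw [Walk.support_nil, List.mem_singleton] at hw
    subst hw; exact hu
  | @cons u m v h q ih =>
    intro ht hu hv w hw
    rw [Walk.isTrail_cons] at ht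
    rw [Walk.support_cons, List.mem_cons] at hw
    rcases hw with rfl | hw
    · exact hu
    by_cases hm : S m
    · exact ih ht.1 hm hv w hw
    · exfalso
      obtain ⟨a, b, hab, hSa, hSb, hmem⟩ := aux_walk_cross (fun x => ¬ S x) q hm (not_not.2 hv)
      have h1 : s(b,a) = e0 := huniq b a hab.symm (not_not.1 hSb) hSa
      have h2 : s(u,m) = e0 := huniq u m h hu hm
      have h3 : s(u,m) ∈ q.edges := by
        rw [h2, ← h1, Sym2.eq_swap]; exact hmem
      exact ht.2 h3

lemma aux_reach_induce {H : SimpleGraph V} {S : Set V} :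
    ∀ {u v : V} (p : H.Walk u v), (∀ w ∈ p.support, w ∈ S) →
      ∀ (hu : u ∈ S) (hv : v ∈ S), (H.induce S).Reachable ⟨u, hu⟩ ⟨v, hv⟩ := by
  intro u v p
  induction p with
  | nil => intro _ hu hv; exact Reachable.refl _
  | @cons u m v h q ih =>
    intro hs hu hv
    have hs' : ∀ w ∈ q.support, w ∈ S := fun w hw =>
      hs w (by rw [Walk.support_cons]; exact List.mem_cons_of_mem _ hw)
    have hm : m ∈ S := hs' m q.start_mem_support
    have hadj : (H.induce S).Adj ⟨u, hu⟩ ⟨m, hm⟩ := by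
      simp only [comap_adj, Function.Embedding.coe_subtype]
      exact h
    exact hadj.reachable.trans (ih hs' hm hv)

lemma aux_induced_card {G : SimpleGraph V} (T : Finset (Sym2 V))
    (hTE : (T : Set (Sym2 V)) ⊆ G.edgeSet)
    (hH : (SimpleGraph.fromEdgeSet (T : Set (Sym2 V))).IsTree)
    (L : Finset V) (hLne : L.Nonempty)
    (hconn : ∀ u ∈ L, ∀ v ∈ L,
      ∃ p : (SimpleGraph.fromEdgeSet (T : Set (Sym2 V))).Walk u v, ∀ w ∈ p.support, w ∈ L) :
    (T ∩ inducedEdges G L).card = L.card - 1 := by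
  set H := SimpleGraph.fromEdgeSet (T : Set (Sym2 V)) with hHdef
  set K := H.induce (↑L : Set V) with hKdef
  have hKconn : K.Connected := by
    rw [connected_iff]
    constructor
    · rintro ⟨u, hu⟩ ⟨v, hv⟩
      obtain ⟨p, hp⟩ := hconn u (Finset.mem_coe.1 hu) v (Finset.mem_coe.1 hv)
      exact aux_reach_induce p (fun w hw => Finset.mem_coe.2 (hp w hw)) hu hv
    · obtain ⟨u, hu⟩ := hLne
      exact ⟨⟨u, Finset.mem_coe.2 hu⟩⟩
  have hKac : K.IsAcyclic := by
    intro v c hc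
    have femb : (H.induce (↑L : Set V)) ↪g H := SimpleGraph.Embedding.induce _
    exact hH.IsAcyclic (c.map femb.toHom) (hc.map femb.injective)
  have hKtree : K.IsTree := ⟨hKconn, hKac⟩
  have hcard := hKtree.card_edgeFinset
  have hfc : Fintype.card ↥(↑L : Set V) = L.card := by simp
  rw [hfc] at hcard
  have hbij : K.edgeFinset.card = (T ∩ inducedEdges G L).card := by
    refine Finset.card_bij (fun e _ => Sym2.map Subtype.val e) ?_ ?_ ?_
    · intro e he
      induction e using Sym2.ind with
      | _ x y =>
        rw [mem_edgeFinset, mem_edgeSet] at he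
        have hadj : H.Adj ↑x ↑y := he
        rw [hHdef, fromEdgeSet_adj] at hadj
        have hG : G.Adj ↑x ↑y := (G.mem_edgeSet).1 (hTE hadj.1)
        simp only [Sym2.map_pair_eq]
        refine Finset.mem_inter.2 ⟨hadj.1, ?_⟩
        rw [aux_mem_ind_pair hG]
        exact ⟨Finset.mem_coe.1 x.2, Finset.mem_coe.1 y.2⟩
    · intro a _ b _ hab
      exact Sym2.map.injective Subtype.val_injective hab
    · intro e he
      induction e using Sym2.ind with
      | _ a b =>
        obtain ⟨heT, heI⟩ := Finset.mem_inter.1 he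
        have hG : G.Adj a b := (G.mem_edgeSet).1 (hTE heT)
        obtain ⟨ha, hb⟩ := (aux_mem_ind_pair hG L).1 heI
        have hadj : K.Adj ⟨a, Finset.mem_coe.2 ha⟩ ⟨b, Finset.mem_coe.2 hb⟩ := by
          simp only [hKdef, comap_adj, Function.Embedding.coe_subtype]
          rw [hHdef, fromEdgeSet_adj]
          exact ⟨heT, hG.ne⟩
        refine ⟨s(⟨a, Finset.mem_coe.2 ha⟩, ⟨b, Finset.mem_coe.2 hb⟩), ?_, ?_⟩
        · rw [mem_edgeFinset, mem_edgeSet]; exact hadj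
        · simp only [Sym2.map_pair_eq]
  omega

lemma aux_gao_cards {G : SimpleGraph V} {T : Finset (Sym2 V)} {A B : Finset V}
    (hTE : (T : Set (Sym2 V)) ⊆ G.edgeSet)
    (hH : (SimpleGraph.fromEdgeSet (T : Set (Sym2 V))).IsTree)
    (hcA : (T ∩ cut G A).card = 1) (hcB : (T ∩ cut G B).card = 1)
    (hAB : A ⊂ B) (hAne : A.Nonempty) (hBtop : ∃ z, z ∉ B) :
    (T ∩ cut G (B \ A)).card = 2 ∧
      (T ∩ inducedEdges G (B \ A)).card = (B \ A).card - 1 := by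
  set H := SimpleGraph.fromEdgeSet (T : Set (Sym2 V)) with hHdef
  set L := B \ A with hLdef
  have hLne : L.Nonempty := by
    obtain ⟨x, hxB, hxA⟩ := Finset.exists_of_ssubset hAB
    exact ⟨x, Finset.mem_sdiff.2 ⟨hxB, hxA⟩⟩
  obtain ⟨e1, he1⟩ := Finset.card_eq_one.1 hcA
  obtain ⟨e2, he2⟩ := Finset.card_eq_one.1 hcB
  have hGadj : ∀ {a b : V}, H.Adj a b → G.Adj a b := by
    intro a b h
    rw [hHdef, SimpleGraph.fromEdgeSet_adj] at h
    exact (G.mem_edgeSet).1 (hTE h.1)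
  have hcross : ∀ (S : Finset V) (a b : V), H.Adj a b → a ∈ S → b ∉ S →
      s(a,b) ∈ T ∩ cut G S := by
    intro S a b hab ha hb
    have h1 : s(a,b) ∈ T := by
      rw [hHdef, SimpleGraph.fromEdgeSet_adj] at hab
      exact hab.1
    exact Finset.mem_inter.2 ⟨h1, (aux_mem_cut_pair (hGadj hab) S).2 (Or.inl ⟨ha, hb⟩)⟩
  have hexist : ∀ (S : Finset V), S.Nonempty → (∃ z, z ∉ S) →
      ∃ a b, H.Adj a b ∧ a ∈ S ∧ b ∉ S := by
    rintro S ⟨u, hu⟩ ⟨z, hz⟩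
    obtain ⟨p⟩ := hH.isConnected.preconnected u z
    obtain ⟨a, b, h1, h2, h3, -⟩ := aux_walk_cross (fun x => x ∈ S) p hu hz
    exact ⟨a, b, h1, h2, h3⟩
  have hne12 : e1 ≠ e2 := by
    intro h12
    obtain ⟨c, d, hcd, hc, hd⟩ := hexist L hLne ⟨hAne.choose, by
      simp [hLdef, Finset.mem_sdiff, hAne.choose_spec]⟩
    rw [hLdef, Finset.mem_sdiff] at hc
    have hdd : d ∉ B ∨ d ∈ A := by
      by_cases hdB : d ∈ B
      · right; by_contra hdA; exact hd (Finset.mem_sdiff.2 ⟨hdB, hdA⟩)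
      · left; exact hdB
    rcases hdd with hdB | hdA
    · have h1 : s(c,d) ∈ T ∩ cut G B := hcross B c d hcd hc.1 hdB
      have he1mem : e1 ∈ T ∩ cut G A := by rw [he1]; exact Finset.mem_singleton_self _
      have heq : s(c,d) = e1 := by
        rw [he2, Finset.mem_singleton] at h1
        rw [h1, h12]
      have h2 : s(c,d) ∈ cut G A := by
        rw [heq]; exact (Finset.mem_inter.1 he1mem).2
      rcases (aux_mem_cut_pair (hGadj hcd) A).1 h2 with ⟨h3, -⟩ | ⟨h3, -⟩
      · exact hc.2 h3
      · exact hdB (hAB.subset h3)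
    · have h1 : s(d,c) ∈ T ∩ cut G A := hcross A d c hcd.symm hdA hc.2
      have he2mem : e2 ∈ T ∩ cut G B := by rw [he2]; exact Finset.mem_singleton_self _
      have heq : s(d,c) = e2 := by
        rw [he1, Finset.mem_singleton] at h1
        rw [h1, h12]
      have h2 : s(d,c) ∈ cut G B := by
        rw [heq]; exact (Finset.mem_inter.1 he2mem).2
      rcases (aux_mem_cut_pair (hGadj hcd.symm) B).1 h2 with ⟨-, h4⟩ | ⟨-, h4⟩
      · exact h4 hc.1
      · exact h4 (hAB.subset hdA)
  -- e1 and e2 are in T and cross L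
  have he1T : e1 ∈ T := (Finset.mem_inter.1 (he1 ▸ Finset.mem_singleton_self e1)).1
  have he2T : e2 ∈ T := (Finset.mem_inter.1 (he2 ▸ Finset.mem_singleton_self e2)).1
  have he1L : e1 ∈ cut G L := by
    have he1C : e1 ∈ cut G A := (Finset.mem_inter.1 (he1 ▸ Finset.mem_singleton_self e1)).2
    rw [cut, cutBetween, Finset.mem_filter] at he1C
    obtain ⟨hEF, a, b, heq, ha, hb⟩ := he1C
    rw [Finset.mem_compl] at hb
    subst heq
    have hGab : G.Adj a b := (G.mem_edgeSet).1 (SimpleGraph.mem_edgeFinset.1 hEF)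
    have hHab : H.Adj a b := by
      rw [hHdef, SimpleGraph.fromEdgeSet_adj]
      exact ⟨Finset.mem_coe.2 he1T, hGab.ne⟩
    have hbB : b ∈ B := by
      by_contra hbB
      have := hcross B a b hHab (hAB.subset ha) hbB
      rw [he2, Finset.mem_singleton] at this
      exact hne12 this
    refine (aux_mem_cut_pair hGab L).2 (Or.inr ⟨Finset.mem_sdiff.2 ⟨hbB, hb⟩, ?_⟩)
    rw [hLdef, Finset.mem_sdiff]
    exact fun h => h.2 ha
  have he2L : e2 ∈ cut G L := by
    have he2C : e2 ∈ cut G B := (Finset.mem_inter.1 (he2 ▸ Finset.mem_singleton_self e2)).2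
    rw [cut, cutBetween, Finset.mem_filter] at he2C
    obtain ⟨hEF, c, d, heq, hc, hd⟩ := he2C
    rw [Finset.mem_compl] at hd
    subst heq
    have hGcd : G.Adj c d := (G.mem_edgeSet).1 (SimpleGraph.mem_edgeFinset.1 hEF)
    have hHcd : H.Adj c d := by
      rw [hHdef, SimpleGraph.fromEdgeSet_adj]
      exact ⟨Finset.mem_coe.2 he2T, hGcd.ne⟩
    have hcA2 : c ∉ A := by
      intro hcA2
      have := hcross A c d hHcd hcA2 (fun h => hd (hAB.subset h))
      rw [he1, Finset.mem_singleton] at this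
      exact hne12 this.symm
    refine (aux_mem_cut_pair hGcd L).2 (Or.inl ⟨Finset.mem_sdiff.2 ⟨hc, hcA2⟩, ?_⟩)
    rw [hLdef, Finset.mem_sdiff]
    exact fun h => hd h.1
  have hset : T ∩ cut G L = {e1, e2} := by
    ext e
    constructor
    · intro he
      obtain ⟨heT, heC⟩ := Finset.mem_inter.1 he
      rw [cut, cutBetween, Finset.mem_filter] at heC
      obtain ⟨hEF, a, b, heq, ha, hb⟩ := heC
      rw [Finset.mem_compl] at hb
      subst heq
      rw [hLdef, Finset.mem_sdiff] at ha
      have hGab : G.Adj a b := (G.mem_edgeSet).1 (SimpleGraph.mem_edgeFinset.1 hEF)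
      have hHab : H.Adj a b := by
        rw [hHdef, SimpleGraph.fromEdgeSet_adj]
        exact ⟨Finset.mem_coe.2 heT, hGab.ne⟩
      have hbb : b ∉ B ∨ b ∈ A := by
        by_cases hbB : b ∈ B
        · right; by_contra hbA; exact hb (Finset.mem_sdiff.2 ⟨hbB, hbA⟩)
        · left; exact hbB
      rcases hbb with hbB | hbA
      · have := hcross B a b hHab ha.1 hbB
        rw [he2, Finset.mem_singleton] at this
        rw [this]
        exact Finset.mem_insert.2 (Or.inr (Finset.mem_singleton_self _))
      · have := hcross A b a hHab.symm hbA ha.2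
        rw [he1, Finset.mem_singleton] at this
        rw [Sym2.eq_swap, this]
        exact Finset.mem_insert_self _ _
    · intro he
      rcases Finset.mem_insert.1 he with rfl | he
      · exact Finset.mem_inter.2 ⟨he1T, he1L⟩
      · rw [Finset.mem_singleton] at he
        subst he
        exact Finset.mem_inter.2 ⟨he2T, he2L⟩
  have hc2 : (T ∩ cut G L).card = 2 := by
    rw [hset]
    exact Finset.card_pair hne12
  have huniqB : ∀ a b, H.Adj a b → a ∈ B → b ∉ B → s(a,b) = e2 := by
    intro a b h ha hb
    have := hcross B a b h ha hb
    rw [he2, Finset.mem_singleton] at this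
    exact this
  have huniqA : ∀ a b, H.Adj a b → a ∉ A → ¬ (b ∉ A) → s(a,b) = e1 := by
    intro a b h ha hb
    have := hcross A b a h.symm (not_not.1 hb) ha
    rw [he1, Finset.mem_singleton] at this
    rw [Sym2.eq_swap]
    exact this
  have hconn : ∀ u ∈ L, ∀ v ∈ L, ∃ p : H.Walk u v, ∀ w ∈ p.support, w ∈ L := by
    intro u hu v hv
    obtain ⟨p0⟩ := hH.isConnected.preconnected u v
    have htrail : p0.bypass.IsTrail := p0.bypass_isPath.isTrail
    rw [hLdef, Finset.mem_sdiff] at hu hv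
    have h1 := aux_trail_stays (fun x => x ∈ B) e2 huniqB p0.bypass htrail hu.1 hv.1
    have h2 := aux_trail_stays (fun x => x ∉ A) e1 huniqA p0.bypass htrail hu.2 hv.2
    exact ⟨p0.bypass, fun w hw => Finset.mem_sdiff.2 ⟨h1 w hw, h2 w hw⟩⟩
  exact ⟨hc2, aux_induced_card T hTE hH L hLne hconn⟩

end AuxStmt17

theorem stmt17 (G : SimpleGraph V) (hG : G.Connected)
    (Vc : ℕ → Finset V) (k : ℕ)
    (hne : (Vc 0).Nonempty) (hchain : ∀ i < k, Vc i ⊂ Vc (i + 1))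
    (htop : Vc k ⊂ Finset.univ)
    (y : Sym2 V → ℝ) (hy : y ∈ gaoPolytope G Vc k) :
    ∀ i, 1 ≤ i → i ≤ k →
      (∑ e ∈ cut G (level Vc k i), y e) = 2 ∧
      (∑ e ∈ inducedEdges G (level Vc k i), y e) = ((level Vc k i).card : ℝ) - 1 ∧
      (∑ v ∈ level Vc k i, ∑ e ∈ cut G {v}, y e) = 2 * ((level Vc k i).card : ℝ) := by
  intro i hi1 hik
  have hmono : ∀ b, b ≤ k → ∀ a, a ≤ b → Vc a ⊆ Vc b := by
    intro b
    induction b with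
    | zero => intro _ a ha; rw [Nat.le_zero.1 ha]
    | succ n ih =>
      intro hnk a ha
      by_cases hh : a = n + 1
      · rw [hh]
      · exact (ih (by omega) a (by omega)).trans (hchain n (by omega)).subset
  have hAB : Vc (i-1) ⊂ Vc i := by
    have := hchain (i-1) (by omega)
    rwa [Nat.sub_add_cancel hi1] at this
  have hAne : (Vc (i-1)).Nonempty := hne.mono (hmono (i-1) (by omega) 0 (by omega))
  have hBtop : ∃ z, z ∉ Vc i := by
    obtain ⟨z, -, hz⟩ := Finset.exists_of_ssubset htop
    exact ⟨z, fun h => hz (hmono k le_rfl i hik h)⟩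
  have hlev : level Vc k i = Vc i \ Vc (i-1) := by
    simp only [level]
    rw [if_neg (by omega), if_pos hik]
  set L := Vc i \ Vc (i-1) with hLdef
  have hLne : L.Nonempty := by
    obtain ⟨x, hxB, hxA⟩ := Finset.exists_of_ssubset hAB
    exact ⟨x, Finset.mem_sdiff.2 ⟨hxB, hxA⟩⟩
  rw [hlev]
  have hsub : {x : Sym2 V → ℝ | ∃ T : Finset (Sym2 V), IsGaoTree G Vc k T ∧ x = chi T} ⊆
      {x : Sym2 V → ℝ | (∑ e ∈ cut G L, x e) = 2 ∧
        (∑ e ∈ inducedEdges G L, x e) = (L.card : ℝ) - 1} := by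
    rintro x ⟨T, hT, rfl⟩
    obtain ⟨hcut2, hind⟩ := aux_gao_cards hT.1.1 hT.1.2 (hT.2 (i-1) (by omega))
      (hT.2 i hik) hAB hAne hBtop
    constructor
    · rw [aux_sum_chi, hcut2]; norm_num
    · rw [aux_sum_chi, hind, Nat.cast_sub hLne.card_pos, Nat.cast_one]
  have hconv : Convex ℝ {x : Sym2 V → ℝ | (∑ e ∈ cut G L, x e) = 2 ∧
      (∑ e ∈ inducedEdges G L, x e) = (L.card : ℝ) - 1} := by
    rintro x ⟨hx1, hx2⟩ y2 ⟨hy1, hy2⟩ a b ha hb hab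
    have hdist : ∀ (A : Finset (Sym2 V)) (c : ℝ),
        (∑ e ∈ A, x e) = c → (∑ e ∈ A, y2 e) = c →
        (∑ e ∈ A, (a • x + b • y2) e) = c := by
      intro A c h1 h2
      have h3 : (∑ e ∈ A, (a • x + b • y2) e)
          = a * (∑ e ∈ A, x e) + b * (∑ e ∈ A, y2 e) := by
        simp [Finset.mul_sum, Finset.sum_add_distrib]
      have h4 : a * c + b * c = (a + b) * c := by ring
      rw [h3, h1, h2, h4, hab, one_mul]
    exact ⟨hdist _ _ hx1 hy1, hdist _ _ hx2 hy2⟩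
  rw [gaoPolytope] at hy
  obtain ⟨hyc, hyi⟩ := convexHull_min hsub hconv hy
  refine ⟨hyc, hyi, ?_⟩
  rw [aux_handshake G L y, hyc, hyi]
  ring
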